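/- Let λ be a finite measure on the unit sphere S of ℝ^d with ∫_S ξ dλ(ξ) = 0, and let g : S → ℝ be measurable with ε₀ < g(ξ) < T₀ λ-a.e. for some 0 < ε₀ < 1 < T₀. Define the finite measure ν on ℝ^d by ν(B) = ∫_S 1_B(g(ξ)ξ) g(ξ)^{-1} dλ(ξ). Then ∫_{ℝ^d} x dν(x) = 0, ν is concentrated on the annulus {ε₀ < |x| < T₀}, and lim_{ε↓0, T↑∞} ∫_ε^T t^{-1} ( ∫_{ℝ^d} x 1_{|x| ≤ t} dν(x) ) dt = − ∫_S ξ log g(ξ) dλ(ξ). -/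

import Mathlib

open MeasureTheory Filter Set
open scoped NNReal ENNReal

noncomputable section

lemma aux_ioc_inter_ici {a b c : ℝ} (h : a < c) : Ioc a b ∩ Ici c = Icc c b := by
  ext x
  simp only [mem_inter_iff, mem_Ioc, mem_Ici, mem_Icc]
  constructor
  · rintro ⟨⟨_, h2⟩, h3⟩; exact ⟨h3, h2⟩
  · rintro ⟨h1, h2⟩; exact ⟨⟨lt_of_lt_of_le h h1, h2⟩, h1⟩

/-- let `λ` be a finite measure on the unit sphere of `ℝ^d` with
`∫_S ξ dλ = 0` and let `g` be measurable with `ε₀ < g < T₀` λ-a.e.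
(`0 < ε₀ < 1 < T₀`). Define `ν(B) = ∫_S 1_B(g(ξ)ξ) g(ξ)⁻¹ dλ(ξ)`, i.e. the
pushforward of `g⁻¹·λ` under `ξ ↦ g(ξ)ξ`.  Then `∫ x dν = 0`, `ν` is concentrated
on the annulus `{ε₀ < |x| < T₀}`, and
`lim_{ε↓0, T↑∞} ∫_ε^T t⁻¹ (∫ x 1_{|x|≤t} dν) dt = -∫_S ξ log g(ξ) dλ(ξ)`. -/
theorem stmt16 {d : ℕ}
    (lam : Measure (EuclideanSpace ℝ (Fin d))) [IsFiniteMeasure lam]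
    (hsphere : lam (Metric.sphere (0 : EuclideanSpace ℝ (Fin d)) 1)ᶜ = 0)
    (hmean : ∫ ξ, ξ ∂lam = 0)
    (ε₀ T₀ : ℝ) (hε₀ : 0 < ε₀) (hε₁ : ε₀ < 1) (hT₀ : 1 < T₀)
    (g : EuclideanSpace ℝ (Fin d) → ℝ) (hg : Measurable g)
    (hbd : ∀ᵐ ξ ∂lam, ε₀ < g ξ ∧ g ξ < T₀)
    (ν : Measure (EuclideanSpace ℝ (Fin d)))
    (hν : ν = Measure.map (fun ξ => g ξ • ξ)
      (lam.withDensity fun ξ => ENNReal.ofReal (g ξ)⁻¹)) :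
    (∫ x, x ∂ν = 0) ∧
    ν {x | ‖x‖ ≤ ε₀ ∨ T₀ ≤ ‖x‖} = 0 ∧
    Tendsto (fun p : ℝ × ℝ =>
        ∫ t in Ioc p.1 p.2, t⁻¹ • (∫ x in {x | ‖x‖ ≤ t}, x ∂ν))
      ((nhdsWithin (0:ℝ) (Ioi 0)) ×ˢ atTop)
      (nhds (-∫ ξ, Real.log (g ξ) • ξ ∂lam)) := by
  set f : EuclideanSpace ℝ (Fin d) → EuclideanSpace ℝ (Fin d) := fun ξ => g ξ • ξ with hfdef
  have hfm : Measurable f := hg.smul measurable_id'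
  set ρ : EuclideanSpace ℝ (Fin d) → ℝ≥0 := fun ξ => Real.toNNReal (g ξ)⁻¹ with hρdef
  have hρm : Measurable ρ := hg.inv.real_toNNReal
  have hμeq : (lam.withDensity fun ξ => ENNReal.ofReal (g ξ)⁻¹)
      = lam.withDensity (fun ξ => ((ρ ξ : ℝ≥0) : ℝ≥0∞)) := rfl
  -- basic a.e. facts
  have hP : ∀ᵐ ξ ∂lam, ‖ξ‖ = 1 ∧ ε₀ < g ξ ∧ g ξ < T₀ := by
    have h1 : ∀ᵐ ξ ∂lam, ξ ∈ Metric.sphere (0 : EuclideanSpace ℝ (Fin d)) 1 := by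
      rw [ae_iff]
      have : {ξ : EuclideanSpace ℝ (Fin d) | ¬ ξ ∈ Metric.sphere (0 : EuclideanSpace ℝ (Fin d)) 1} = (Metric.sphere (0 : EuclideanSpace ℝ (Fin d)) 1)ᶜ := rfl
      rw [this]; exact hsphere
    filter_upwards [h1, hbd] with ξ h1 h2
    exact ⟨by simpa [mem_sphere_iff_norm] using h1, h2⟩
  have hPnull : lam {ξ : EuclideanSpace ℝ (Fin d) | ¬ (‖ξ‖ = 1 ∧ ε₀ < g ξ ∧ g ξ < T₀)} = 0 := ae_iff.mp hP
  have hnf : ∀ ξ : EuclideanSpace ℝ (Fin d), ‖ξ‖ = 1 → ε₀ < g ξ → ‖f ξ‖ = g ξ := by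
    intro ξ hn h1
    rw [hfdef]
    simp only [norm_smul, hn, mul_one, Real.norm_eq_abs]
    exact abs_of_pos (lt_trans hε₀ h1)
  -- integral against ν expressed via lam
  have hint_tot : ∫ x, x ∂ν = ∫ ξ, (ρ ξ : ℝ) • f ξ ∂lam := by
    rw [hν, integral_map (f := fun x => x) hfm.aemeasurable aestronglyMeasurable_id, hμeq,
      integral_withDensity_eq_integral_smul hρm]
    simp_rw [NNReal.smul_def]
  have hint_map : ∀ (s : Set (EuclideanSpace ℝ (Fin d))), MeasurableSet s →
      ∫ x in s, x ∂ν = ∫ ξ in f ⁻¹' s, (ρ ξ : ℝ) • f ξ ∂lam := by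
    intro s hs
    rw [hν, setIntegral_map (f := fun x => x) hs aestronglyMeasurable_id hfm.aemeasurable, hμeq,
      restrict_withDensity (hfm hs), integral_withDensity_eq_integral_smul hρm]
    simp_rw [NNReal.smul_def]
  have hptw : ∀ᵐ ξ ∂lam, (ρ ξ : ℝ) • f ξ = ξ := by
    filter_upwards [hP] with ξ hξ
    obtain ⟨hn, h1, h2⟩ := hξ
    have hgpos : 0 < g ξ := lt_trans hε₀ h1
    rw [hρdef, hfdef]
    simp only
    rw [Real.coe_toNNReal _ (le_of_lt (inv_pos.2 hgpos)), smul_smul,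
      inv_mul_cancel₀ (ne_of_gt hgpos), one_smul]
  -- part 1
  have part1 : ∫ x, x ∂ν = 0 := by
    rw [hint_tot, integral_congr_ae hptw, hmean]
  -- part 2
  have hsmeas : MeasurableSet {x : EuclideanSpace ℝ (Fin d) | ‖x‖ ≤ ε₀ ∨ T₀ ≤ ‖x‖} :=
    (measurableSet_le measurable_norm measurable_const).union
      (measurableSet_le measurable_const measurable_norm)
  have part2 : ν {x | ‖x‖ ≤ ε₀ ∨ T₀ ≤ ‖x‖} = 0 := by
    rw [hν, Measure.map_apply hfm hsmeas]
    refine withDensity_absolutelyContinuous lam _ ?_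
    refine measure_mono_null ?_ hPnull
    intro ξ hξ hPξ
    obtain ⟨hn, h1, h2⟩ := hPξ
    simp only [mem_preimage, mem_setOf_eq] at hξ
    rw [hnf ξ hn h1] at hξ
    rcases hξ with h | h <;> linarith
  -- integrability facts
  have hlam_id_int : Integrable (fun ξ : EuclideanSpace ℝ (Fin d) => ξ) lam := by
    refine Integrable.mono' (integrable_const (1:ℝ)) aestronglyMeasurable_id ?_
    filter_upwards [hP] with ξ hξ
    rw [hξ.1]
  have hlog_int : Integrable (fun ξ : EuclideanSpace ℝ (Fin d) => Real.log (g ξ) • ξ) lam := by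
    refine Integrable.mono' (μ := lam)
      (g := fun _ => max (-Real.log ε₀) (Real.log T₀)) (integrable_const _)
      (((Real.measurable_log.comp hg).smul measurable_id).aestronglyMeasurable) ?_
    filter_upwards [hP] with ξ hξ
    obtain ⟨hn, h1, h2⟩ := hξ
    rw [norm_smul, hn, mul_one, Real.norm_eq_abs]
    have hlb : Real.log ε₀ ≤ Real.log (g ξ) := Real.log_le_log hε₀ h1.le
    have hub : Real.log (g ξ) ≤ Real.log T₀ :=
      Real.log_le_log (lt_trans hε₀ h1) h2.le
    refine abs_le.2 ⟨?_, le_trans hub (le_max_right _ _)⟩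
    have := le_max_left (-Real.log ε₀) (Real.log T₀)
    linarith
  -- the truncated mean as an integral over lam
  have hF : ∀ t : ℝ, ∫ x in {x : EuclideanSpace ℝ (Fin d) | ‖x‖ ≤ t}, x ∂ν
      = ∫ ξ, ({ξ : EuclideanSpace ℝ (Fin d) | g ξ ≤ t}.indicator (fun ξ => ξ)) ξ ∂lam := by
    intro t
    have hst : MeasurableSet {x : EuclideanSpace ℝ (Fin d) | ‖x‖ ≤ t} :=
      measurableSet_le measurable_norm measurable_const
    rw [hint_map _ hst, ← integral_indicator (hfm hst)]
    refine integral_congr_ae ?_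
    filter_upwards [hP, hptw] with ξ hPξ hpt
    obtain ⟨hn, h1, h2⟩ := hPξ
    have hnfξ : ‖f ξ‖ = g ξ := hnf ξ hn h1
    by_cases h : g ξ ≤ t
    · rw [indicator_of_mem (by simp only [mem_preimage, mem_setOf_eq, hnfξ]; exact h),
        indicator_of_mem (show ξ ∈ {ξ | g ξ ≤ t} from h), hpt]
    · rw [indicator_of_notMem (by simp only [mem_preimage, mem_setOf_eq, hnfξ]; exact h),
        indicator_of_notMem (show ξ ∉ {ξ | g ξ ≤ t} from h)]
  -- eventual constancy
  have hconst : ∀ᶠ p : ℝ × ℝ in (nhdsWithin (0:ℝ) (Ioi 0)) ×ˢ atTop,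
      (∫ t in Ioc p.1 p.2, t⁻¹ • (∫ x in {x : EuclideanSpace ℝ (Fin d) | ‖x‖ ≤ t}, x ∂ν))
        = -∫ ξ, Real.log (g ξ) • ξ ∂lam := by
    have h1 : ∀ᶠ ε in nhdsWithin (0:ℝ) (Ioi 0), ε ∈ Ioo 0 ε₀ :=
      eventually_of_mem (Ioo_mem_nhdsGT_of_mem ⟨le_refl 0, hε₀⟩) (fun x hx => hx)
    have h2 : ∀ᶠ T in (atTop : Filter ℝ), T₀ < T := eventually_gt_atTop T₀
    filter_upwards [h1.prod_mk h2]
    rintro ⟨ε, T⟩ ⟨⟨hε, hεe⟩, hT⟩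
    simp only at *
    have hTpos : (0:ℝ) < T := by linarith
    -- rewrite integrand
    have step1 : ∀ t : ℝ, t⁻¹ • (∫ x in {x : EuclideanSpace ℝ (Fin d) | ‖x‖ ≤ t}, x ∂ν)
        = ∫ ξ, (if g ξ ≤ t then t⁻¹ else 0) • ξ ∂lam := by
      intro t
      rw [hF t, ← integral_smul]
      refine integral_congr_ae (Eventually.of_forall fun ξ => ?_)
      simp only [Set.indicator_apply, mem_setOf_eq]
      by_cases h : g ξ ≤ t <;> simp [h]
    simp_rw [step1]
    -- Fubini
    have hfin : IsFiniteMeasure (volume.restrict (Ioc ε T)) :=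
      ⟨by rw [Measure.restrict_apply_univ]; exact measure_Ioc_lt_top⟩
    have hm : Measurable (Function.uncurry fun (t : ℝ) (ξ : EuclideanSpace ℝ (Fin d)) =>
        (if g ξ ≤ t then t⁻¹ else 0) • ξ) := by
      show Measurable fun p : ℝ × EuclideanSpace ℝ (Fin d) => (if g p.2 ≤ p.1 then p.1⁻¹ else 0) • p.2
      refine Measurable.smul (f := fun p : ℝ × EuclideanSpace ℝ (Fin d) => if g p.2 ≤ p.1 then p.1⁻¹ else 0) ?_ measurable_snd
      exact Measurable.ite (measurableSet_le (hg.comp measurable_snd) measurable_fst)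
        measurable_fst.inv measurable_const
    have hker : Integrable (Function.uncurry fun (t : ℝ) (ξ : EuclideanSpace ℝ (Fin d)) =>
        (if g ξ ≤ t then t⁻¹ else 0) • ξ) ((volume.restrict (Ioc ε T)).prod lam) := by
      refine Integrable.mono' (integrable_const (ε⁻¹)) hm.aestronglyMeasurable ?_
      have ha : ∀ᵐ p ∂((volume.restrict (Ioc ε T)).prod lam), p.1 ∈ Ioc ε T := by
        rw [ae_iff]
        have hset : {p : ℝ × EuclideanSpace ℝ (Fin d) | ¬ p.1 ∈ Ioc ε T} = (Ioc ε T)ᶜ ×ˢ (univ : Set (EuclideanSpace ℝ (Fin d))) := by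
          ext p; simp [Set.mem_prod]
        rw [hset, Measure.prod_prod, Measure.restrict_apply measurableSet_Ioc.compl]
        simp
      have hb : ∀ᵐ p ∂((volume.restrict (Ioc ε T)).prod lam), ‖p.2‖ = 1 := by
        rw [ae_iff]
        have hset : {p : ℝ × EuclideanSpace ℝ (Fin d) | ¬ ‖p.2‖ = 1} = (univ : Set ℝ) ×ˢ {ξ : EuclideanSpace ℝ (Fin d) | ¬ ‖ξ‖ = 1} := by
          ext p; simp [Set.mem_prod]
        rw [hset, Measure.prod_prod]
        have hsub : {ξ : EuclideanSpace ℝ (Fin d) | ¬ ‖ξ‖ = 1}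
            ⊆ {ξ : EuclideanSpace ℝ (Fin d) | ¬(‖ξ‖ = 1 ∧ ε₀ < g ξ ∧ g ξ < T₀)} :=
          fun ξ h hc => h hc.1
        have : lam {ξ : EuclideanSpace ℝ (Fin d) | ¬ ‖ξ‖ = 1} = 0 :=
          measure_mono_null hsub hPnull
        rw [this, mul_zero]
      filter_upwards [ha, hb] with p hp1 hp2
      have : ‖Function.uncurry (fun (t : ℝ) (ξ : EuclideanSpace ℝ (Fin d)) => (if g ξ ≤ t then t⁻¹ else 0) • ξ) p‖
          = |if g p.2 ≤ p.1 then p.1⁻¹ else 0| := by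
        rw [Function.uncurry]
        simp only [norm_smul, hp2, mul_one, Real.norm_eq_abs]
      rw [this]
      by_cases h : g p.2 ≤ p.1
      · rw [if_pos h, abs_of_nonneg (inv_nonneg.2 (le_of_lt (lt_trans hε hp1.1)))]
        exact inv_anti₀ hε hp1.1.le
      · rw [if_neg h, abs_zero]
        positivity
    rw [integral_integral_swap hker]
    simp_rw [integral_smul_const]
    -- inner integral computation
    have hinner : ∀ᵐ ξ ∂lam,
        (∫ t in Ioc ε T, (if g ξ ≤ t then t⁻¹ else 0)) • ξ
          = (Real.log T • ξ - Real.log (g ξ) • ξ) := by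
      filter_upwards [hP] with ξ hξ
      obtain ⟨hn, h1, h2⟩ := hξ
      have hgε : ε < g ξ := lt_trans hεe h1
      have hgpos : 0 < g ξ := lt_trans hε₀ h1
      have hgT : g ξ ≤ T := by linarith
      rw [← sub_smul]
      congr 1
      have hind : (fun t : ℝ => if g ξ ≤ t then t⁻¹ else 0)
          = (Ici (g ξ)).indicator (fun t => t⁻¹) := by
        ext t
        by_cases h : g ξ ≤ t
        · rw [if_pos h, indicator_of_mem (mem_Ici.mpr h)]
        · rw [if_neg h, indicator_of_notMem (fun hc => h (mem_Ici.mp hc))]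
      rw [hind, setIntegral_indicator measurableSet_Ici, aux_ioc_inter_ici hgε,
        integral_Icc_eq_integral_Ioc, ← intervalIntegral.integral_of_le hgT,
        integral_inv_of_pos hgpos hTpos,
        Real.log_div (ne_of_gt hTpos) (ne_of_gt hgpos)]
    have h1int : Integrable (fun ξ : EuclideanSpace ℝ (Fin d) => Real.log T • ξ) lam :=
      hlam_id_int.smul (Real.log T)
    rw [integral_congr_ae hinner, integral_sub h1int hlog_int,
      integral_smul, hmean, smul_zero, zero_sub]
  exact ⟨part1, part2, Tendsto.congr'
    (hconst.mono fun p hp => hp.symm) tendsto_const_nhds⟩
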